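/- Let X be a Banach space, B a nonempty subset of ℕ, (x_n)_{n∈B} a family of norm-one vectors in X, and (λ_k)_{k∈ℕ} a sequence of distinct reals in the interval (0, 1/2). Define y_k = Σ_{n∈B} λ_k^n x_n for each k ∈ ℕ. Then for every infinite C ⊆ ℕ, the closed linear span of {y_k : k ∈ C} equals the closed linear span of {x_n : n ∈ B}. -/

import Mathlib

open Cardinal Set

universe u

/-- The density character of a topological space: the least cardinality of a dense subset. -/
noncomputable def dens (X : Type u) [TopologicalSpace X] : Cardinal.{u} :=
  ⨅ s : {s : Set X // Dense s}, Cardinal.mk ↥(s.1)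

/-- A set is linearly dense if its closed linear span is the whole space. -/
def LinearlyDense {X : Type u} [NormedAddCommGroup X] [NormedSpace ℝ X] (S : Set X) : Prop :=
  (Submodule.span ℝ S).topologicalClosure = ⊤

/-- A set `Y` is overcomplete in `X` if `|Y| = dens X` and every subset of `Y` of full
cardinality is linearly dense in `X`. -/
def Overcomplete {X : Type u} [NormedAddCommGroup X] [NormedSpace ℝ X] (Y : Set X) : Prop :=
  Cardinal.mk ↥Y = dens X ∧ ∀ Z ⊆ Y, Cardinal.mk ↥Z = Cardinal.mk ↥Y → LinearlyDense Z

open scoped Classical ENNReal NNReal Topology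
open FormalMultilinearSeries

lemma aux_hb {X : Type u} [NormedAddCommGroup X] [NormedSpace ℝ X]
    (p : Submodule ℝ X) (v : X)
    (h : ∀ φ : X →L[ℝ] ℝ, (∀ z ∈ p, φ z = 0) → φ v = 0) :
    v ∈ p.topologicalClosure := by
  by_contra hv
  obtain ⟨f, u, hf1, hf2⟩ := geometric_hahn_banach_closed_point
    (p.topologicalClosure.convex) (Submodule.isClosed_topologicalClosure p) hv
  have hker : ∀ z ∈ p.topologicalClosure, f z = 0 := by
    intro z hz
    by_contra hfz
    have ht : ∀ t : ℝ, t * f z < u := by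
      intro t
      have : f (t • z) < u := hf1 _ (Submodule.smul_mem _ t hz)
      simpa using this
    have := ht ((u + 1) / f z)
    rw [div_mul_cancel₀ _ hfz] at this
    linarith
  have h0 : f v = 0 := h f fun z hz => hker z (Submodule.le_topologicalClosure p hz)
  have : f 0 < u := hf1 0 (Submodule.zero_mem _)
  simp at this
  linarith [hf2, h0]

lemma aux_coeff (a : ℕ → ℝ) (M : ℝ) (hM : ∀ n, |a n| ≤ M)
    (S : Set ℝ) (hS : S.Infinite) (hS2 : S ⊆ Set.Icc 0 (1/2))
    (hz : ∀ t ∈ S, (∑' n : ℕ, a n * t ^ n) = 0) : a = 0 := by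
  set p := ofScalars ℝ a with hp
  have hrad : (1 : ℝ≥0∞) ≤ p.radius := by
    rw [← ENNReal.coe_one]
    apply p.le_radius_of_bound M
    intro n
    rw [ofScalars_norm]
    simpa using hM n
  have hball : HasFPowerSeriesOnBall p.sum p 0 1 :=
    (p.hasFPowerSeriesOnBall (lt_of_lt_of_le one_pos hrad)).mono one_pos hrad
  have hFval : ∀ t : ℝ, p.sum t = ∑' n : ℕ, a n * t ^ n := by
    intro t
    simp only [FormalMultilinearSeries.sum, hp, ofScalars_apply_eq, smul_eq_mul]
  have hUeq : Metric.eball (0 : ℝ) 1 = Metric.ball (0 : ℝ) 1 := by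
    rw [← ENNReal.coe_one, Metric.emetric_ball_nnreal]; norm_num
  have han : AnalyticOnNhd ℝ p.sum (Metric.ball (0 : ℝ) 1) := by
    rw [← hUeq]; exact hball.analyticOnNhd
  -- accumulation point
  obtain ⟨z0, hz0, hacc⟩ := hS.exists_accPt_of_subset_isCompact isCompact_Icc hS2
  have hfreq : ∃ᶠ z in 𝓝[≠] z0, p.sum z = 0 := by
    have := accPt_iff_frequently.mp hacc
    rw [frequently_nhdsWithin_iff]
    exact this.mono fun z hzz => ⟨by rw [hFval]; exact hz z hzz.2, hzz.1⟩
  have hz0mem : z0 ∈ Metric.ball (0 : ℝ) 1 := by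
    simp only [Metric.mem_ball, Real.dist_eq, sub_zero]
    have := hS2; rcases hz0 with ⟨h1, h2⟩
    rw [abs_of_nonneg h1]; linarith
  have heq : Set.EqOn p.sum 0 (Metric.ball (0 : ℝ) 1) :=
    han.eqOn_zero_of_preconnected_of_frequently_eq_zero
      (convex_ball _ _).isPreconnected hz0mem hfreq
  have hev : p.sum =ᶠ[nhds (0 : ℝ)] 0 := by
    filter_upwards [Metric.isOpen_ball.mem_nhds (by simp : (0:ℝ) ∈ Metric.ball (0:ℝ) 1)] with z hzb
    exact heq hzb
  have hp0 : p = 0 := hball.hasFPowerSeriesAt.eq_zero_of_eventually hev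
  exact (ofScalars_series_eq_zero ℝ).mp hp0


/-- Klee: for norm-one vectors `x n`, `n ∈ B`, and distinct `λ k ∈ (0,1/2)`,
the vectors `y k = ∑_{n∈B} (λ k)^n • x n` satisfy: for every infinite `C ⊆ ℕ`, the closed
span of `{y k : k ∈ C}` equals the closed span of `{x n : n ∈ B}`. -/
theorem stmt2 {X : Type u} [NormedAddCommGroup X] [NormedSpace ℝ X] [CompleteSpace X]
    (B : Set ℕ) (hB : B.Nonempty) (x : ℕ → X) (hx : ∀ n ∈ B, ‖x n‖ = 1)
    (lam : ℕ → ℝ) (hinj : Function.Injective lam)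
    (hmem : ∀ k, lam k ∈ Set.Ioo (0 : ℝ) (1/2))
    (y : ℕ → X) (hy : ∀ k, y k = ∑' n : B, (lam k) ^ (n : ℕ) • x (n : ℕ))
    (C : Set ℕ) (hC : C.Infinite) :
    (Submodule.span ℝ (y '' C)).topologicalClosure
      = (Submodule.span ℝ (x '' B)).topologicalClosure := by
  have hsm : ∀ k, Summable (fun n : B => (lam k) ^ (n : ℕ) • x (n : ℕ)) := by
    intro k
    obtain ⟨h0, h1⟩ := hmem k
    apply Summable.of_norm_bounded (g := fun n : B => (lam k) ^ (n : ℕ))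
      ((summable_geometric_of_lt_one h0.le (by linarith)).subtype B)
    intro n
    rw [norm_smul, norm_pow, Real.norm_eq_abs, abs_of_pos h0, hx n n.2, mul_one]
  apply le_antisymm
  · apply Submodule.topologicalClosure_minimal
    · rw [Submodule.span_le]
      rintro _ ⟨k, hk, rfl⟩
      rw [SetLike.mem_coe, hy k]
      have hs := (hsm k).hasSum
      refine (Submodule.isClosed_topologicalClosure _).mem_of_tendsto hs ?_
      filter_upwards with s
      exact Submodule.sum_mem _ fun n _ => Submodule.le_topologicalClosure _
        (Submodule.smul_mem _ _ (Submodule.subset_span ⟨n, n.2, rfl⟩))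
    · exact Submodule.isClosed_topologicalClosure _
  · apply Submodule.topologicalClosure_minimal
    · rw [Submodule.span_le]
      rintro _ ⟨m, hm, rfl⟩
      rw [SetLike.mem_coe]
      refine aux_hb _ _ fun φ hφ => ?_
      set a : ℕ → ℝ := fun n => if n ∈ B then φ (x n) else 0 with hadef
      have ha : a = 0 := by
        apply aux_coeff a ‖φ‖ _ (lam '' C) (hC.image hinj.injOn) _ _
        · intro n
          by_cases hn : n ∈ B
          · simp only [hadef, if_pos hn]
            calc |φ (x n)| = ‖φ (x n)‖ := (Real.norm_eq_abs _).symm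
              _ ≤ ‖φ‖ * ‖x n‖ := φ.le_opNorm _
              _ = ‖φ‖ := by rw [hx n hn, mul_one]
          · simp [hadef, if_neg hn, norm_nonneg]
        · rintro t ⟨k, hk, rfl⟩
          exact ⟨(hmem k).1.le, (hmem k).2.le⟩
        · rintro t ⟨k, hk, rfl⟩
          have hsupp : Function.support (fun n : ℕ => a n * lam k ^ n) ⊆ B := by
            intro n hn
            by_contra hnB
            apply hn
            simp [hadef, if_neg hnB]
          have h1 : (∑' n : ℕ, a n * lam k ^ n) = ∑' n : B, a (n : ℕ) * lam k ^ (n : ℕ) :=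
            (tsum_subtype_eq_of_support_subset hsupp).symm
          have h2 : (∑' n : B, a (n : ℕ) * lam k ^ (n : ℕ)) = φ (y k) := by
            rw [hy k, φ.map_tsum (hsm k)]
            refine tsum_congr fun n => ?_
            rw [φ.map_smul, hadef]
            simp only [if_pos n.2, smul_eq_mul]
            ring
          rw [h1, h2]
          exact hφ _ (Submodule.subset_span ⟨k, hk, rfl⟩)
      have := congrFun ha m
      simpa [hadef, if_pos hm] using this
    · exact Submodule.isClosed_topologicalClosure _
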